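/- Suppose F 0 = 1 and for all a ≥ 1, (a+1)·F a = −∑_{b=0}^{a−1} Ξ b * F (a−1−b), and G 0 = 1 with ∑_{b=0}^{a} G b * F (a−b) = 0 for all a ≥ 1. If moreover Ξ 0 and Ξ 1 commute ((Ξ 0)*(Ξ 1) = (Ξ 1)*(Ξ 0)), then G 3 = (1/8)·(Ξ 0)*(Ξ 1) + (1/4)·Ξ 2. -/
import Mathlib


/-- Under the Folland–Stein recursions for the frame matrix
coefficients `G` and its inverse `F` (driven by the structure-function data `Ξ`),
if moreover `Ξ 0` and `Ξ 1` commute, then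
`G 3 = (1/8) • (Ξ 0 * Ξ 1) + (1/4) • Ξ 2`. -/
theorem stmt2 {R : Type*} [Ring R] [Algebra ℚ R] (Ξ F G : ℕ → R)
    (hF0 : F 0 = 1)
    (hFrec : ∀ a : ℕ, 1 ≤ a →
      ((a : ℚ) + 1) • F a = -∑ b ∈ Finset.range a, Ξ b * F (a - 1 - b))
    (hG0 : G 0 = 1)
    (hGF : ∀ a : ℕ, 1 ≤ a → ∑ b ∈ Finset.range (a + 1), G b * F (a - b) = 0)
    (hcomm : Ξ 0 * Ξ 1 = Ξ 1 * Ξ 0) :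
    G 3 = (1 / 8 : ℚ) • (Ξ 0 * Ξ 1) + (1 / 4 : ℚ) • Ξ 2 := by
  set A := Ξ 0 with hA
  set B := Ξ 1 with hB
  set C := Ξ 2 with hC
  have h1 := hFrec 1 (by norm_num)
  have h2 := hFrec 2 (by norm_num)
  have h3 := hFrec 3 (by norm_num)
  simp [Finset.sum_range_succ, hF0] at h1 h2 h3
  have hF1 : F 1 = -((1/2 : ℚ) • A) := by
    have : F 1 = (1/2 : ℚ) • (((1:ℚ)+1) • F 1) := by
      rw [smul_smul]; norm_num
    rw [this, h1]; module
  have hF2 : F 2 = (1/6 : ℚ) • (A*A) - (1/3 : ℚ) • B := by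
    have : F 2 = (1/3 : ℚ) • (((2:ℚ)+1) • F 2) := by
      rw [smul_smul]; norm_num
    rw [this, h2, hF1]
    simp [mul_smul_comm, smul_smul, smul_sub, smul_add, mul_neg]
    module
  have hF3 : F 3 = -(1/24 : ℚ) • (A*A*A) + (1/12 : ℚ) • (A*B)
      + (1/8 : ℚ) • (B*A) - (1/4 : ℚ) • C := by
    have : F 3 = (1/4 : ℚ) • (((3:ℚ)+1) • F 3) := by
      rw [smul_smul]; norm_num
    rw [this, h3, hF1, hF2]
    simp [mul_smul_comm, smul_smul, smul_sub, smul_add, mul_sub, mul_neg, mul_add, mul_assoc]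
    module
  have g1 := hGF 1 (by norm_num)
  have g2 := hGF 2 (by norm_num)
  have g3 := hGF 3 (by norm_num)
  simp [Finset.sum_range_succ, hF0, hG0] at g1 g2 g3
  have hG1 : G 1 = (1/2 : ℚ) • A := by
    have : G 1 = -(F 1) := by linear_combination (norm := noncomm_ring) g1
    rw [this, hF1]; module
  have hG2 : G 2 = (1/12 : ℚ) • (A*A) + (1/3 : ℚ) • B := by
    have h : G 2 = -(F 2) - G 1 * F 1 := by linear_combination (norm := noncomm_ring) g2
    rw [h, hF1, hF2, hG1]
    simp [mul_smul_comm, smul_mul_assoc, smul_smul, smul_sub, smul_add, mul_neg]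
    module
  have h : G 3 = -(F 3) - G 1 * F 2 - G 2 * F 1 := by
    linear_combination (norm := noncomm_ring) g3
  rw [h, hF1, hF2, hF3, hG1, hG2]
  simp [mul_smul_comm, smul_mul_assoc, smul_smul, smul_sub, smul_add, mul_sub, mul_add, add_mul, sub_mul, mul_neg, neg_mul, mul_assoc]
  rw [show B * A = A * B from hcomm.symm]
  module
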